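/- arXiv:1606.07320 — 5 statements merged into one kernel-verified Lean document; each statement's English description precedes it below -/
import Mathlib

section
/- If u ∈ L^2(R^N) ∩ L^∞(R^N), then u belongs to the Orlicz space exp L^2(R^N) and ‖u‖_{exp L^2} ≤ (1/√(log 2)) (‖u‖_{L^2} + ‖u‖_{L^∞}). -/
open MeasureTheory
open scoped ENNReal NNReal

/-- Luxembourg norm of the Orlicz space exp L² on ℝ^N. -/
noncomputable def expL2Norm {N : ℕ} (u : EuclideanSpace ℝ (Fin N) → ℝ) : ℝ :=
  sInf {α : ℝ | 0 < α ∧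
    (∫⁻ x, ENNReal.ofReal (Real.exp ((u x) ^ 2 / α ^ 2) - 1)) ≤ 1}

private lemma exp_convex_aux (θ c : ℝ) (h0 : 0 ≤ θ) (h1 : θ ≤ 1) :
    Real.exp (θ * c) ≤ (1 - θ) + θ * Real.exp c := by
  have h := convexOn_exp.2 (Set.mem_univ (0:ℝ)) (Set.mem_univ c)
    (by linarith : (0:ℝ) ≤ 1 - θ) h0 (by ring)
  simpa using h

private lemma lintegral_sq_eq {N : ℕ} (u : EuclideanSpace ℝ (Fin N) → ℝ) :
    (∫⁻ x, ENNReal.ofReal ((u x) ^ 2)) = (eLpNorm u 2 volume) ^ 2 := by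
  have hpt : ∀ x, ((‖u x‖₊ : ℝ≥0∞)) ^ (2:ℕ) = ENNReal.ofReal (u x ^ 2) := by
    intro x
    have h : u x ^ 2 = ‖u x * u x‖ := by
      rw [Real.norm_eq_abs, abs_mul, ← sq_abs, sq]
    rw [h, ofReal_norm, enorm_eq_nnnorm, nnnorm_mul, ENNReal.coe_mul, sq]
  rw [eLpNorm_eq_lintegral_rpow_enorm_toReal (by norm_num) (by norm_num)]
  simp only [ENNReal.toReal_ofNat]
  rw [← ENNReal.rpow_natCast _ 2, ← ENNReal.rpow_mul]
  norm_num
  exact (lintegral_congr fun x => (hpt x).symm)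

/-- If u ∈ L² ∩ L^∞ then u ∈ exp L² with
    ‖u‖_{exp L²} ≤ (1/√(log 2)) (‖u‖_{L²} + ‖u‖_{L^∞}). -/
theorem l2_linfty_embeds_expL2 {N : ℕ} (u : EuclideanSpace ℝ (Fin N) → ℝ)
    (h2 : MemLp u 2 volume) (hi : MemLp u ⊤ volume) :
    (∃ α > 0, (∫⁻ x, ENNReal.ofReal (Real.exp ((u x) ^ 2 / α ^ 2) - 1)) < ⊤) ∧
    expL2Norm u ≤ (1 / Real.sqrt (Real.log 2)) *
      ((eLpNorm u 2 volume).toReal + (eLpNorm u ⊤ volume).toReal) := by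
  have hlog : 0 < Real.log 2 := Real.log_pos (by norm_num)
  have hsq : 0 < Real.sqrt (Real.log 2) := Real.sqrt_pos.2 hlog
  by_cases hz : u =ᵐ[volume] (0 : EuclideanSpace ℝ (Fin N) → ℝ)
  · -- trivial case: u = 0 a.e.
    have hzero : ∀ α : ℝ,
        (∫⁻ x, ENNReal.ofReal (Real.exp ((u x) ^ 2 / α ^ 2) - 1)) = 0 := by
      intro α
      have h0 : ∀ᵐ x ∂(volume : Measure (EuclideanSpace ℝ (Fin N))),
          ENNReal.ofReal (Real.exp ((u x) ^ 2 / α ^ 2) - 1) = 0 := by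
        filter_upwards [hz] with x hx
        simp [hx]
      rw [lintegral_congr_ae h0, lintegral_zero]
    have hA : eLpNorm u 2 volume = 0 :=
      (eLpNorm_eq_zero_iff h2.1 (by norm_num)).2 hz
    have hB : eLpNorm u ⊤ volume = 0 :=
      (eLpNorm_eq_zero_iff hi.1 (by simp)).2 hz
    refine ⟨⟨1, one_pos, ?_⟩, ?_⟩
    · rw [hzero 1]; exact ENNReal.zero_lt_top
    rw [hA, hB]
    simp only [ENNReal.toReal_zero, add_zero, mul_zero]
    have hle : ∀ ε : ℝ, 0 < ε → expL2Norm u ≤ ε := by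
      intro ε hε
      apply csInf_le ⟨0, fun x hx => hx.1.le⟩
      exact ⟨hε, by simp [hzero ε]⟩
    have := le_of_forall_pos_le_add (a := expL2Norm u) (b := 0)
      (fun ε hε => by simpa using hle ε hε)
    exact this
  · -- main case
    set A := (eLpNorm u 2 volume).toReal with hAdef
    set B := (eLpNorm u ⊤ volume).toReal with hBdef
    have hA2ne : eLpNorm u 2 volume ≠ 0 := by
      rw [Ne, eLpNorm_eq_zero_iff h2.1 (by norm_num)]; exact hz
    have hBne : eLpNorm u ⊤ volume ≠ 0 := by
      rw [Ne, eLpNorm_eq_zero_iff hi.1 (by simp)]; exact hz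
    have hApos : 0 < A := ENNReal.toReal_pos hA2ne h2.2.ne
    have hBpos : 0 < B := ENNReal.toReal_pos hBne hi.2.ne
    set C := A + B with hCdef
    have hCpos : 0 < C := by positivity
    set α := (1 / Real.sqrt (Real.log 2)) * C with hαdef
    have hαpos : 0 < α := by positivity
    have hα2 : α ^ 2 = C ^ 2 / Real.log 2 := by
      rw [hαdef, mul_pow, div_pow, one_pow, Real.sq_sqrt hlog.le]
      ring
    -- a.e. bound |u x| ≤ B
    have hub : ∀ᵐ x ∂(volume : Measure (EuclideanSpace ℝ (Fin N))), |u x| ≤ B := by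
      have h1 := enorm_ae_le_eLpNormEssSup u (volume : Measure (EuclideanSpace ℝ (Fin N)))
      filter_upwards [h1] with x hx
      have hfin : eLpNormEssSup u volume ≠ ⊤ := by
        rw [← eLpNorm_exponent_top]; exact hi.2.ne
      have := ENNReal.toReal_mono hfin hx
      simpa [hBdef, eLpNorm_exponent_top, Real.norm_eq_abs] using this
    -- pointwise bound
    have key : ∀ᵐ x ∂(volume : Measure (EuclideanSpace ℝ (Fin N))),
        ENNReal.ofReal (Real.exp ((u x) ^ 2 / α ^ 2) - 1) ≤
        ENNReal.ofReal ((u x) ^ 2 / C ^ 2) := by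
      filter_upwards [hub] with x hx
      apply ENNReal.ofReal_le_ofReal
      set θ := (u x) ^ 2 / B ^ 2 with hθdef
      set s := B ^ 2 / C ^ 2 with hsdef
      have hu2 : (u x) ^ 2 ≤ B ^ 2 := by
        rw [← sq_abs]; exact pow_le_pow_left₀ (abs_nonneg _) hx 2
      have hθ0 : 0 ≤ θ := by positivity
      have hθ1 : θ ≤ 1 := by
        rw [hθdef, div_le_one (by positivity)]; exact hu2
      have hs0 : 0 ≤ s := by positivity
      have hs1 : s ≤ 1 := by
        rw [hsdef, div_le_one (by positivity)]
        nlinarith [hApos.le, hBpos.le]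
      have e1 : (u x) ^ 2 / α ^ 2 = θ * (s * Real.log 2) := by
        rw [hα2, hθdef, hsdef]
        field_simp
      have e2 := exp_convex_aux θ (s * Real.log 2) hθ0 hθ1
      have e3 : Real.exp (s * Real.log 2) ≤ 1 + s := by
        have := exp_convex_aux s (Real.log 2) hs0 hs1
        rwa [Real.exp_log (by norm_num : (0:ℝ) < 2), show (1 - s) + s * 2 = 1 + s by ring] at this
      have e4 : θ * s = (u x) ^ 2 / C ^ 2 := by
        rw [hθdef, hsdef]
        field_simp
      have e5 : θ * Real.exp (s * Real.log 2) ≤ θ * (1 + s) :=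
        mul_le_mul_of_nonneg_left e3 hθ0
      have e6 : θ * (1 + s) = θ + θ * s := by ring
      rw [e1, ← e4]
      linarith
    -- integral bound
    have haemeas : AEMeasurable (fun x => ENNReal.ofReal ((u x) ^ 2)) volume := by
      exact ENNReal.measurable_ofReal.comp_aemeasurable ((h2.1.aemeasurable).pow_const 2)
    have hintC : (∫⁻ x, ENNReal.ofReal ((u x) ^ 2 / C ^ 2)) =
        (∫⁻ x, ENNReal.ofReal ((u x) ^ 2)) * ENNReal.ofReal (C ^ 2)⁻¹ := by
      rw [← lintegral_mul_const'' _ haemeas]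
      apply lintegral_congr
      intro x
      rw [← ENNReal.ofReal_mul (by positivity), div_eq_mul_inv]
    have hL2 : (∫⁻ x, ENNReal.ofReal ((u x) ^ 2)) = ENNReal.ofReal (A ^ 2) := by
      rw [lintegral_sq_eq u, ← ENNReal.ofReal_toReal h2.2.ne, ← hAdef,
        ← ENNReal.ofReal_pow hApos.le]
    have hle1 : (∫⁻ x, ENNReal.ofReal (Real.exp ((u x) ^ 2 / α ^ 2) - 1)) ≤ 1 := by
      calc (∫⁻ x, ENNReal.ofReal (Real.exp ((u x) ^ 2 / α ^ 2) - 1))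
          ≤ ∫⁻ x, ENNReal.ofReal ((u x) ^ 2 / C ^ 2) := lintegral_mono_ae key
        _ = ENNReal.ofReal (A ^ 2) * ENNReal.ofReal (C ^ 2)⁻¹ := by rw [hintC, hL2]
        _ = ENNReal.ofReal (A ^ 2 / C ^ 2) := by
            rw [← ENNReal.ofReal_mul (by positivity), div_eq_mul_inv]
        _ ≤ 1 := by
            rw [← ENNReal.ofReal_one]
            apply ENNReal.ofReal_le_ofReal
            rw [div_le_one (by positivity)]
            nlinarith [hApos.le, hBpos.le]
    refine ⟨⟨α, hαpos, lt_of_le_of_lt hle1 (by norm_num)⟩, ?_⟩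
    exact csInf_le ⟨0, fun x hx => hx.1.le⟩ ⟨hαpos, hle1⟩
end

section
/- The function u defined on R^N by u(x) = (log(1 − log|x|))^{1/2} for 0 < |x| ≤ 1 and u(x)=0 for |x|>1 satisfies ∫_{R^N}(e^{u(x)^2/α^2}−1)dx < ∞ for every α > 0, yet u is not essentially bounded. Hence exp L^2_0(R^N) is not contained in L^∞(R^N). -/
open MeasureTheory Set Metric
open scoped ENNReal NNReal

lemma aux_pow_le_exp (x : ℝ) (hx : 0 ≤ x) (k : ℕ) :
    x ^ k ≤ k.factorial * Real.exp x := by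
  have h := Real.sum_le_exp_of_nonneg hx (k + 1)
  have h2 : x ^ k / k.factorial ≤ ∑ i ∈ Finset.range (k + 1), x ^ i / i.factorial :=
    Finset.single_le_sum (f := fun i => x ^ i / i.factorial)
      (fun i _ => by positivity) (Finset.self_mem_range_succ k)
  have hk : (0 : ℝ) < k.factorial := by positivity
  rw [div_le_iff₀ hk] at h2
  calc x ^ k ≤ (∑ i ∈ Finset.range (k + 1), x ^ i / i.factorial) * k.factorial := h2
    _ ≤ Real.exp x * k.factorial := by gcongr
    _ = k.factorial * Real.exp x := mul_comm _ _

/-- The function u(x) = (log(1−log|x|))^{1/2} for |x|≤1, 0 otherwise, belongs to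
    exp L²₀ (finite integral for every α > 0) but is not essentially bounded. -/
theorem expL2zero_not_Linfty_example {N : ℕ} (hN : 1 ≤ N)
    (u : EuclideanSpace ℝ (Fin N) → ℝ)
    (hu : ∀ x, u x = if ‖x‖ ≤ 1 then Real.sqrt (Real.log (1 - Real.log ‖x‖)) else 0) :
    (∀ α : ℝ, 0 < α →
      (∫⁻ x, ENNReal.ofReal (Real.exp ((u x) ^ 2 / α ^ 2) - 1)) < ⊤) ∧
    eLpNorm u ⊤ volume = ⊤ := by
  haveI : Nonempty (Fin N) := Fin.pos_iff_nonempty.mp hN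
  haveI : Nontrivial (EuclideanSpace ℝ (Fin N)) :=
    inferInstanceAs (Nontrivial (PiLp 2 fun _ : Fin N => ℝ))
  have hufun : u = fun x => if ‖x‖ ≤ 1 then Real.sqrt (Real.log (1 - Real.log ‖x‖)) else 0 :=
    funext hu
  have hum : Measurable u := by
    rw [hufun]
    exact Measurable.ite (measurableSet_le measurable_norm measurable_const)
      (Real.continuous_sqrt.measurable.comp
        (Real.measurable_log.comp (measurable_const.sub
          (Real.measurable_log.comp measurable_norm)))) measurable_const
  constructor
  · -- Part 1 : exponential integrability
    intro α hα
    set s : ℝ := α ^ 2 with hs_def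
    have hs : 0 < s := by positivity
    set F : EuclideanSpace ℝ (Fin N) → ℝ := fun x => Real.exp ((u x) ^ 2 / α ^ 2) - 1 with hF_def
    have hF0 : ∀ x, 0 ≤ F x := by
      intro x
      have h1 : (0:ℝ) ≤ (u x) ^ 2 / α ^ 2 := by positivity
      have h2 := Real.one_le_exp h1
      show 0 ≤ Real.exp ((u x) ^ 2 / α ^ 2) - 1
      linarith
    have hFm : Measurable F := by
      apply Measurable.sub _ measurable_const
      exact Real.measurable_exp.comp ((hum.pow_const 2).div_const _)
    rw [lintegral_eq_lintegral_meas_le volume (Filter.Eventually.of_forall hF0)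
      hFm.aemeasurable]
    set R : ℝ → ℝ := fun t => Real.exp (1 - (1 + t) ^ s) with hR_def
    have hRpos : ∀ t, 0 < R t := fun t => Real.exp_pos _
    -- superlevel sets are contained in balls
    have hsub : ∀ t : ℝ, 0 < t →
        {x : EuclideanSpace ℝ (Fin N) | t ≤ F x} ⊆ closedBall 0 (R t) := by
      intro t ht x hx
      have hx' : t ≤ Real.exp ((u x) ^ 2 / α ^ 2) - 1 := hx
      have hx1 : ‖x‖ ≤ 1 := by
        by_contra hc
        rw [hu x, if_neg hc] at hx'
        simp only [ne_eq, OfNat.ofNat_ne_zero, not_false_eq_true, zero_pow, zero_div,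
          Real.exp_zero, sub_self] at hx'
        linarith
      rcases eq_or_lt_of_le (norm_nonneg x) with hy0 | hy0
      · exfalso
        rw [hu x, if_pos hx1, ← hy0] at hx'
        simp only [Real.log_zero, sub_zero, Real.log_one, Real.sqrt_zero, ne_eq,
          OfNat.ofNat_ne_zero, not_false_eq_true, zero_pow, zero_div, Real.exp_zero,
          sub_self] at hx'
        linarith
      · have hlogy : Real.log ‖x‖ ≤ 0 := Real.log_nonpos hy0.le hx1
        have hLpos : (0:ℝ) < 1 - Real.log ‖x‖ := by linarith
        have hL : 0 ≤ Real.log (1 - Real.log ‖x‖) := Real.log_nonneg (by linarith)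
        have hsq : (u x) ^ 2 = Real.log (1 - Real.log ‖x‖) := by
          rw [hu x, if_pos hx1, Real.sq_sqrt hL]
        have hexp : Real.exp ((u x) ^ 2 / α ^ 2) = (1 - Real.log ‖x‖) ^ (1 / α ^ 2) := by
          rw [hsq, Real.rpow_def_of_pos hLpos, mul_one_div]
        rw [hexp] at hx'
        have h1t : (1:ℝ) + t ≤ (1 - Real.log ‖x‖) ^ (1 / α ^ 2) := by linarith
        have hmono : ((1:ℝ) + t) ^ s ≤ ((1 - Real.log ‖x‖) ^ (1 / α ^ 2)) ^ s :=
          Real.rpow_le_rpow (by linarith) h1t hs.le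
        have hcollapse : ((1 - Real.log ‖x‖) ^ (1 / α ^ 2)) ^ s = 1 - Real.log ‖x‖ := by
          rw [← Real.rpow_mul hLpos.le, one_div, inv_mul_cancel₀ (by positivity : (α:ℝ)^2 ≠ 0),
            Real.rpow_one]
        rw [hcollapse] at hmono
        have h6 : Real.log ‖x‖ ≤ 1 - (1 + t) ^ s := by linarith
        have h7 : ‖x‖ ≤ R t := by
          calc ‖x‖ = Real.exp (Real.log ‖x‖) := (Real.exp_log hy0).symm
            _ ≤ Real.exp (1 - (1 + t) ^ s) := Real.exp_le_exp.mpr h6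
        exact mem_closedBall_zero_iff.mpr h7
    set k : ℕ := ⌈2 / s⌉₊ with hk_def
    set K : ℝ := Real.exp 1 * k.factorial with hK_def
    have hK0 : 0 ≤ K := by positivity
    have hsk : 2 ≤ s * k := by
      have h1 : 2 / s ≤ (k:ℝ) := Nat.le_ceil _
      calc (2:ℝ) = s * (2 / s) := by field_simp
        _ ≤ s * k := by
          apply mul_le_mul_of_nonneg_left h1 hs.le
    have hRbound : ∀ t : ℝ, 0 < t → R t ≤ K * (1 + t) ^ (-(2:ℝ)) := by
      intro t ht
      have h1t : (1:ℝ) ≤ 1 + t := by linarith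
      have h0t : (0:ℝ) < 1 + t := by linarith
      have hz : 0 ≤ (1 + t) ^ s := Real.rpow_nonneg h0t.le _
      have hA : ((1:ℝ) + t) ^ (2:ℝ) ≤ (k.factorial : ℝ) * Real.exp ((1 + t) ^ s) := by
        calc ((1:ℝ) + t) ^ (2:ℝ) ≤ (1 + t) ^ (s * k) :=
            Real.rpow_le_rpow_of_exponent_le h1t hsk
          _ = ((1 + t) ^ s) ^ k := by
            rw [Real.rpow_mul h0t.le, Real.rpow_natCast]
          _ ≤ k.factorial * Real.exp ((1 + t) ^ s) := aux_pow_le_exp _ hz k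
      have hexp_pos : (0:ℝ) < Real.exp ((1 + t) ^ s) := Real.exp_pos _
      have hpow_pos : (0:ℝ) < (1 + t) ^ (2:ℝ) := Real.rpow_pos_of_pos h0t _
      have hR_eq : R t = Real.exp 1 / Real.exp ((1 + t) ^ s) := Real.exp_sub _ _
      have hgoal : K * (1 + t) ^ (-(2:ℝ)) = K / (1 + t) ^ (2:ℝ) := by
        rw [Real.rpow_neg h0t.le, div_eq_mul_inv]
      rw [hR_eq, hgoal, div_le_div_iff₀ hexp_pos hpow_pos, hK_def]
      nlinarith [mul_le_mul_of_nonneg_left hA (Real.exp_pos 1).le]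
    have hbound : ∀ t ∈ Ioi (0:ℝ), volume {x : EuclideanSpace ℝ (Fin N) | t ≤ F x} ≤
        ENNReal.ofReal (K * (1 + t) ^ (-(2:ℝ))) *
          volume (ball (0 : EuclideanSpace ℝ (Fin N)) 1) := by
      intro t ht
      have ht' : 0 < t := mem_Ioi.mp ht
      calc volume {x : EuclideanSpace ℝ (Fin N) | t ≤ F x}
          ≤ volume (closedBall (0 : EuclideanSpace ℝ (Fin N)) (R t)) :=
            measure_mono (hsub t ht')
        _ = ENNReal.ofReal (R t ^ Module.finrank ℝ (EuclideanSpace ℝ (Fin N))) *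
            volume (ball (0 : EuclideanSpace ℝ (Fin N)) 1) :=
            Measure.addHaar_closedBall volume 0 (hRpos t).le
        _ ≤ ENNReal.ofReal (K * (1 + t) ^ (-(2:ℝ))) *
            volume (ball (0 : EuclideanSpace ℝ (Fin N)) 1) := by
            gcongr
            rw [finrank_euclideanSpace_fin]
            have hR1 : R t ≤ 1 := by
              have h1 : (1:ℝ) ≤ (1 + t) ^ s := Real.one_le_rpow (by linarith) hs.le
              calc Real.exp (1 - (1 + t) ^ s) ≤ Real.exp 0 := Real.exp_le_exp.mpr (by linarith)
                _ = 1 := Real.exp_zero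
            calc R t ^ N ≤ R t ^ 1 := pow_le_pow_of_le_one (hRpos t).le hR1 hN
              _ = R t := pow_one _
              _ ≤ K * (1 + t) ^ (-(2:ℝ)) := hRbound t ht'
    have htail : (∫⁻ t in Ioi (0:ℝ), ENNReal.ofReal (K * (1 + t) ^ (-(2:ℝ)))) < ⊤ := by
      have hle : ∀ t ∈ Ioi (0:ℝ), ENNReal.ofReal (K * (1 + t) ^ (-(2:ℝ))) ≤
          ENNReal.ofReal K * ENNReal.ofReal ((1 + ‖t‖) ^ (-(2:ℝ))) := by
        intro t ht
        rw [Real.norm_eq_abs, abs_of_pos (mem_Ioi.mp ht), ← ENNReal.ofReal_mul hK0]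
      calc (∫⁻ t in Ioi (0:ℝ), ENNReal.ofReal (K * (1 + t) ^ (-(2:ℝ))))
          ≤ ∫⁻ t in Ioi (0:ℝ), ENNReal.ofReal K * ENNReal.ofReal ((1 + ‖t‖) ^ (-(2:ℝ))) :=
            setLIntegral_mono' measurableSet_Ioi hle
        _ = ENNReal.ofReal K * ∫⁻ t in Ioi (0:ℝ), ENNReal.ofReal ((1 + ‖t‖) ^ (-(2:ℝ))) :=
            lintegral_const_mul' _ _ ENNReal.ofReal_ne_top
        _ ≤ ENNReal.ofReal K * ∫⁻ t : ℝ, ENNReal.ofReal ((1 + ‖t‖) ^ (-(2:ℝ))) := by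
            gcongr
            exact Measure.restrict_le_self
        _ < ⊤ := by
            apply ENNReal.mul_lt_top ENNReal.ofReal_lt_top
            apply finite_integral_one_add_norm
            simp
    calc (∫⁻ t in Ioi (0:ℝ), volume {x : EuclideanSpace ℝ (Fin N) | t ≤ F x})
        ≤ ∫⁻ t in Ioi (0:ℝ), ENNReal.ofReal (K * (1 + t) ^ (-(2:ℝ))) *
            volume (ball (0 : EuclideanSpace ℝ (Fin N)) 1) :=
          setLIntegral_mono' measurableSet_Ioi hbound
      _ = (∫⁻ t in Ioi (0:ℝ), ENNReal.ofReal (K * (1 + t) ^ (-(2:ℝ)))) *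
            volume (ball (0 : EuclideanSpace ℝ (Fin N)) 1) :=
          lintegral_mul_const' _ _ measure_ball_lt_top.ne
      _ < ⊤ := ENNReal.mul_lt_top htail measure_ball_lt_top
  · -- Part 2 : not essentially bounded
    rw [eLpNorm_exponent_top]
    by_contra h
    set E : ℝ≥0∞ := eLpNormEssSup u volume with hE_def
    have hEtop : E ≠ ⊤ := h
    set M : ℝ := E.toReal with hM_def
    have hM0 : 0 ≤ M := ENNReal.toReal_nonneg
    set r₀ : ℝ := Real.exp (-(Real.exp (M ^ 2))) with hr_def
    have hr₀pos : 0 < r₀ := Real.exp_pos _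
    have hr₀le1 : r₀ ≤ 1 := by
      rw [hr_def]
      have h1 : -(Real.exp (M ^ 2)) ≤ 0 := neg_nonpos.mpr (Real.exp_pos _).le
      calc Real.exp (-(Real.exp (M ^ 2))) ≤ Real.exp 0 := Real.exp_le_exp.mpr h1
        _ = 1 := Real.exp_zero
    have hkey : ∀ x : EuclideanSpace ℝ (Fin N), x ∈ ball (0 : EuclideanSpace ℝ (Fin N)) r₀ \ {0} →
        M < u x := by
      intro x hx
      obtain ⟨hxball, hxne⟩ := hx
      rw [mem_ball_zero_iff] at hxball
      have hxpos : 0 < ‖x‖ := norm_pos_iff.mpr (by simpa using hxne)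
      have hx1 : ‖x‖ ≤ 1 := le_trans hxball.le hr₀le1
      have hlog : Real.log ‖x‖ < -(Real.exp (M ^ 2)) := by
        calc Real.log ‖x‖ < Real.log r₀ := Real.log_lt_log hxpos hxball
          _ = -(Real.exp (M ^ 2)) := Real.log_exp _
      have h2 : Real.exp (M ^ 2) < 1 - Real.log ‖x‖ := by linarith
      have h3 : M ^ 2 < Real.log (1 - Real.log ‖x‖) := by
        calc M ^ 2 = Real.log (Real.exp (M ^ 2)) := (Real.log_exp _).symm
          _ < Real.log (1 - Real.log ‖x‖) := Real.log_lt_log (Real.exp_pos _) h2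
      have h4 : Real.sqrt (M ^ 2) < Real.sqrt (Real.log (1 - Real.log ‖x‖)) :=
        Real.sqrt_lt_sqrt (by positivity) h3
      rw [Real.sqrt_sq hM0] at h4
      rw [hu x, if_pos hx1]
      exact h4
    have hae : ∀ᵐ x ∂(volume : Measure (EuclideanSpace ℝ (Fin N))),
        (‖u x‖₊ : ℝ≥0∞) ≤ E := ae_le_eLpNormEssSup
    have hnull : volume {x : EuclideanSpace ℝ (Fin N) | ¬ ((‖u x‖₊ : ℝ≥0∞) ≤ E)} = 0 :=
      ae_iff.mp hae
    have hsub : ball (0 : EuclideanSpace ℝ (Fin N)) r₀ \ {0} ⊆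
        {x : EuclideanSpace ℝ (Fin N) | ¬ ((‖u x‖₊ : ℝ≥0∞) ≤ E)} := by
      intro x hx
      have hMu : M < u x := hkey x hx
      have hupos : 0 < u x := lt_of_le_of_lt hM0 hMu
      simp only [mem_setOf_eq, not_le]
      have h1 : (‖u x‖₊ : ℝ≥0∞) = ENNReal.ofReal (u x) :=
        Real.enorm_eq_ofReal hupos.le
      rw [h1, ← ENNReal.ofReal_toReal hEtop]
      exact (ENNReal.ofReal_lt_ofReal_iff hupos).mpr hMu
    have hzero : volume (ball (0 : EuclideanSpace ℝ (Fin N)) r₀ \ {0}) = 0 :=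
      measure_mono_null hsub hnull
    rw [measure_diff_null (measure_singleton _)] at hzero
    exact absurd hzero (measure_ball_pos volume 0 hr₀pos).ne'
end

section
/- Let N ≥ 9 and q > N/4. The function κ(t) = min{ t^{−N/(4q)} + 1 , t^{−N/4} (log(t^{−N/4}+1))^{−1/2} } is integrable on (0, ∞). -/
open MeasureTheory

/-- For N ≥ 9 and q > N/4, the function
    κ(t) = min{t^{−N/(4q)}+1, t^{−N/4}(log(t^{−N/4}+1))^{−1/2}} is integrable on (0,∞). -/
theorem kappa_integrable (N : ℕ) (hN : 9 ≤ N) (q : ℝ) (hq : (N : ℝ) / 4 < q) :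
    IntegrableOn (fun t : ℝ =>
        min (t ^ (-(N : ℝ) / (4 * q)) + 1)
          (t ^ (-(N : ℝ) / 4) * (Real.log (t ^ (-(N : ℝ) / 4) + 1)) ^ (-(1 / 2 : ℝ))))
      (Set.Ioi (0 : ℝ)) volume := by
  have hN9 : (9 : ℝ) ≤ (N : ℝ) := by exact_mod_cast hN
  have hNpos : (0 : ℝ) < N := by linarith
  have hqpos : (0 : ℝ) < q := by linarith
  set f : ℝ → ℝ := fun t : ℝ =>
        min (t ^ (-(N : ℝ) / (4 * q)) + 1)
          (t ^ (-(N : ℝ) / 4) * (Real.log (t ^ (-(N : ℝ) / 4) + 1)) ^ (-(1 / 2 : ℝ))) with hf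
  have hmeas : AEStronglyMeasurable f (volume.restrict (Set.Ioi (0:ℝ))) := by
    apply Measurable.aestronglyMeasurable
    measurability
  -- nonnegativity facts
  have hbnonneg : ∀ t : ℝ, 0 < t →
      0 ≤ t ^ (-(N : ℝ) / 4) * (Real.log (t ^ (-(N : ℝ) / 4) + 1)) ^ (-(1 / 2 : ℝ)) := by
    intro t ht
    apply mul_nonneg (Real.rpow_nonneg ht.le _)
    apply Real.rpow_nonneg
    apply Real.log_nonneg
    nlinarith [Real.rpow_pos_of_pos ht (-(N : ℝ) / 4)]
  have hanonneg : ∀ t : ℝ, 0 < t → 0 ≤ t ^ (-(N : ℝ) / (4 * q)) + 1 := by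
    intro t ht
    positivity
  -- split
  have hsplit : Set.Ioi (0:ℝ) = Set.Ioc (0:ℝ) 1 ∪ Set.Ioi (1:ℝ) :=
    (Set.Ioc_union_Ioi_eq_Ioi zero_le_one).symm
  rw [hsplit]
  apply IntegrableOn.union
  · -- on (0,1]: dominated by t^{-N/(4q)} + 1
    have hexp : (-1 : ℝ) < -(N : ℝ) / (4 * q) := by
      rw [neg_div, neg_lt_neg_iff]
      rw [div_lt_one (by positivity)]
      linarith
    have hint : IntegrableOn (fun t : ℝ => t ^ (-(N : ℝ) / (4 * q)) + 1)
        (Set.Ioc (0:ℝ) 1) volume := by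
      apply Integrable.add
      · have := intervalIntegral.intervalIntegrable_rpow' (a := 0) (b := 1) hexp
        rw [intervalIntegrable_iff, Set.uIoc_of_le (by norm_num : (0:ℝ) ≤ 1)] at this
        exact this
      · exact integrableOn_const measure_Ioc_lt_top.ne
    apply Integrable.mono' hint (hmeas.mono_set (by rw [hsplit]; exact Set.subset_union_left))
    filter_upwards [ae_restrict_mem measurableSet_Ioc] with t ht
    rw [Real.norm_eq_abs, abs_of_nonneg (le_min (hanonneg t ht.1) (hbnonneg t ht.1))]
    exact min_le_left _ _
  · -- on (1,∞): dominated by √2 * t^{-N/8}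
    have hexp : -(N : ℝ) / 8 < -1 := by
      rw [neg_div, neg_lt_neg_iff]; rw [lt_div_iff₀ (by norm_num : (0:ℝ) < 8)]; linarith
    have hint : IntegrableOn (fun t : ℝ => Real.sqrt 2 * t ^ (-(N : ℝ) / 8))
        (Set.Ioi (1:ℝ)) volume :=
      (integrableOn_Ioi_rpow_of_lt hexp one_pos).const_mul _
    apply Integrable.mono' hint (hmeas.mono_set (by rw [hsplit]; exact Set.subset_union_right))
    filter_upwards [ae_restrict_mem measurableSet_Ioi] with t ht
    have ht0 : (0:ℝ) < t := lt_trans one_pos ht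
    rw [Real.norm_eq_abs, abs_of_nonneg (le_min (hanonneg t ht0) (hbnonneg t ht0))]
    refine le_trans (min_le_right _ _) ?_
    set s : ℝ := t ^ (-(N : ℝ) / 4) with hs
    have hs0 : 0 < s := Real.rpow_pos_of_pos ht0 _
    have hs1 : s ≤ 1 := by
      rw [hs]
      calc t ^ (-(N : ℝ) / 4) ≤ t ^ (0:ℝ) := by
            apply Real.rpow_le_rpow_of_exponent_le ht.le
            rw [neg_div]; simp; positivity
        _ = 1 := Real.rpow_zero t
    -- log (s+1) ≥ s/2
    have hlog : s / 2 ≤ Real.log (s + 1) := by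
      have h1 : 1 - (s + 1)⁻¹ ≤ Real.log (s + 1) :=
        Real.one_sub_inv_le_log_of_pos (by linarith)
      have h2 : s / 2 ≤ 1 - (s + 1)⁻¹ := by
        rw [le_sub_iff_add_le]
        have : (s + 1)⁻¹ ≤ 1 / (s + 1) := by rw [one_div]
        rw [inv_eq_one_div]
        rw [div_add_div _ _ (by norm_num : (2:ℝ) ≠ 0) (by positivity : s + 1 ≠ 0)]
        rw [div_le_one (by positivity)]
        nlinarith
      linarith
    have hlogpos : 0 < Real.log (s + 1) := lt_of_lt_of_le (by positivity) hlog
    have hle : (Real.log (s + 1)) ^ (-(1/2:ℝ)) ≤ (s / 2) ^ (-(1/2:ℝ)) :=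
      Real.rpow_le_rpow_of_nonpos (by positivity) hlog (by norm_num)
    calc s * (Real.log (s + 1)) ^ (-(1/2:ℝ))
        ≤ s * (s / 2) ^ (-(1/2:ℝ)) := by
          exact mul_le_mul_of_nonneg_left hle hs0.le
      _ = Real.sqrt 2 * s ^ ((1:ℝ)/2) := by
          have hss : s ^ ((1:ℝ)/2) * s ^ ((1:ℝ)/2) = s := by
            rw [← Real.rpow_add hs0]; norm_num
          have hspos : 0 < s ^ ((1:ℝ)/2) := Real.rpow_pos_of_pos hs0 _
          have h2pos : 0 < (2:ℝ) ^ ((1:ℝ)/2) := Real.rpow_pos_of_pos two_pos _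
          rw [Real.rpow_neg (by positivity), Real.div_rpow hs0.le (by norm_num : (0:ℝ) ≤ 2),
            Real.sqrt_eq_rpow]
          rw [inv_div, mul_div_assoc', div_eq_iff hspos.ne']
          rw [mul_assoc, hss, mul_comm]
      _ = Real.sqrt 2 * t ^ (-(N:ℝ)/8) := by
          rw [hs, ← Real.rpow_mul ht0.le]
          congr 1
          ring
end

section
/- Let f: R → R satisfy f(0) = 0 and |f(u) − f(v)| ≤ C|u−v|(e^{λu²} + e^{λv²}) for all u, v ∈ R, some C, λ > 0. Let 2 ≤ p < ∞ and let u, w ∈ exp L²(R^N). Then ‖f(u) − f(w)‖_{L^p} ≤ C' ‖u − w‖_{exp L²} (1 + ‖e^{λu²}−1‖_{L^{2p}} + ‖e^{λw²}−1‖_{L^{2p}}) for a constant C' depending only on C and p. -/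
open MeasureTheory
open scoped ENNReal NNReal

-- t^m ≤ ⌈m⌉! (e^t - 1) for t ≥ 0, m ≥ 1
lemma scalar_key {m t : ℝ} (hm : 1 ≤ m) (ht : 0 ≤ t) :
    t ^ m ≤ Nat.factorial (Nat.ceil m) * (Real.exp t - 1) := by
  set n := Nat.ceil m with hn
  have hn1 : 1 ≤ n := Nat.one_le_ceil_iff.mpr (by linarith)
  have hfac : (1:ℝ) ≤ (n.factorial : ℝ) := by exact_mod_cast Nat.one_le_iff_ne_zero.mpr (Nat.factorial_ne_zero n)
  have hexp : t ^ n / n.factorial ≤ Real.exp t - 1 := by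
    have hsum := Real.sum_le_exp_of_nonneg ht (n+1)
    have h0 : ∀ i ∈ Finset.range (n+1), 0 ≤ t ^ i / i.factorial := by
      intro i _; positivity
    have : (1:ℝ) + t ^ n / n.factorial ≤ ∑ i ∈ Finset.range (n+1), t ^ i / i.factorial := by
      have h1 : ∑ i ∈ Finset.range (n+1), t ^ i / i.factorial =
          ∑ i ∈ Finset.range n, t ^ i / i.factorial + t ^ n / n.factorial := Finset.sum_range_succ _ _
      have h2 : (1:ℝ) ≤ ∑ i ∈ Finset.range n, t ^ i / i.factorial := by
        calc (1:ℝ) = t ^ 0 / Nat.factorial 0 := by simp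
        _ ≤ ∑ i ∈ Finset.range n, t ^ i / i.factorial := by
            refine Finset.single_le_sum (f := fun i => t ^ i / i.factorial) (fun i _ => by positivity) ?_
            simp [Nat.pos_of_ne_zero, hn1]; omega
      linarith
    linarith
  rcases le_or_gt t 1 with h1 | h1
  · have : t ^ m ≤ t := by
      calc t ^ m ≤ t ^ (1:ℝ) := Real.rpow_le_rpow_of_exponent_ge' ht h1 zero_le_one hm
      _ = t := Real.rpow_one t
    have ht' : t ≤ Real.exp t - 1 := by linarith [Real.add_one_le_exp t]
    calc t ^ m ≤ t := this
    _ ≤ Real.exp t - 1 := ht'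
    _ ≤ n.factorial * (Real.exp t - 1) := le_mul_of_one_le_left (by linarith) hfac
  · have hmn : m ≤ (n:ℝ) := Nat.le_ceil m
    have : t ^ m ≤ t ^ (n:ℝ) := Real.rpow_le_rpow_of_exponent_le h1.le hmn
    calc t ^ m ≤ t ^ (n:ℝ) := this
    _ = t ^ n := by rw [Real.rpow_natCast]
    _ ≤ n.factorial * (Real.exp t - 1) := by
        rw [div_le_iff₀ (by positivity)] at hexp; linarith [hexp]

lemma embed {N : ℕ} {q : ℝ} (hq : 2 ≤ q) (v : EuclideanSpace ℝ (Fin N) → ℝ) {α : ℝ} (hα : 0 < α)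
    (hint : (∫⁻ x, ENNReal.ofReal (Real.exp ((v x) ^ 2 / α ^ 2) - 1)) ≤ 1) :
    eLpNorm v (ENNReal.ofReal q) volume ≤
      ENNReal.ofReal ((Nat.factorial (Nat.ceil (q/2)) : ℝ) ^ (1/q) * α) := by
  have hq0 : 0 < q := by linarith
  have hP0 : ENNReal.ofReal q ≠ 0 := by simp [ENNReal.ofReal_eq_zero]; linarith
  have hPt : ENNReal.ofReal q ≠ ⊤ := ENNReal.ofReal_ne_top
  set K : ℝ := (Nat.factorial (Nat.ceil (q/2)) : ℝ) with hK
  have hK1 : 1 ≤ K := by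
    rw [hK]
    exact_mod_cast Nat.one_le_iff_ne_zero.mpr (Nat.factorial_ne_zero (Nat.ceil (q/2)))
  have hKpos : 0 < K := by linarith
  rw [eLpNorm_eq_lintegral_rpow_enorm_toReal hP0 hPt]
  rw [ENNReal.toReal_ofReal hq0.le]
  have key : (∫⁻ x, (‖v x‖₊ : ℝ≥0∞) ^ q) ≤ ENNReal.ofReal (K * α ^ q) := by
    have hpt : ∀ x, (‖v x‖₊ : ℝ≥0∞) ^ q ≤
        ENNReal.ofReal (K * α ^ q) * ENNReal.ofReal (Real.exp ((v x) ^ 2 / α ^ 2) - 1) := by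
      intro x
      have hnn : (‖v x‖₊ : ℝ≥0∞) ^ q = ENNReal.ofReal (‖v x‖ ^ q) := by
        rw [show (‖v x‖₊ : ℝ≥0∞) = ENNReal.ofReal ‖v x‖ from (ofReal_norm (v x)).symm, ← ENNReal.ofReal_rpow_of_nonneg (norm_nonneg _) hq0.le]
      rw [hnn, ← ENNReal.ofReal_mul (by positivity)]
      apply ENNReal.ofReal_le_ofReal
      set t : ℝ := (v x) ^ 2 / α ^ 2 with htdef
      have ht0 : 0 ≤ t := by positivity
      have h1 : ‖v x‖ ^ q = t ^ (q/2) * α ^ q := by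
        have hv2 : (v x) ^ 2 = t * α ^ 2 := by
          rw [htdef]; field_simp
        calc ‖v x‖ ^ q = (|v x| ^ (2:ℕ)) ^ (q/2) := by
              rw [Real.norm_eq_abs, ← Real.rpow_natCast |v x| 2,
                ← Real.rpow_mul (abs_nonneg _)]
              congr 1
              push_cast; ring
          _ = ((v x) ^ 2) ^ (q/2) := by rw [sq_abs]
          _ = (t * α ^ 2) ^ (q/2) := by rw [← hv2]
          _ = t ^ (q/2) * ((α:ℝ) ^ (2:ℕ)) ^ (q/2) := Real.mul_rpow ht0 (by positivity)
          _ = t ^ (q/2) * α ^ q := by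
              rw [← Real.rpow_natCast α 2, ← Real.rpow_mul hα.le]
              congr 1
              push_cast; ring
      rw [h1]
      have hkey := scalar_key (m := q/2) (by linarith) ht0
      have halq : (0:ℝ) ≤ α ^ q := by positivity
      calc t ^ (q/2) * α ^ q ≤ (K * (Real.exp t - 1)) * α ^ q :=
            mul_le_mul_of_nonneg_right hkey halq
        _ = K * α ^ q * (Real.exp t - 1) := by ring
    calc (∫⁻ x, (‖v x‖₊ : ℝ≥0∞) ^ q)
        ≤ ∫⁻ x, ENNReal.ofReal (K * α ^ q) * ENNReal.ofReal (Real.exp ((v x) ^ 2 / α ^ 2) - 1) :=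
          lintegral_mono hpt
      _ = ENNReal.ofReal (K * α ^ q) * ∫⁻ x, ENNReal.ofReal (Real.exp ((v x) ^ 2 / α ^ 2) - 1) :=
          lintegral_const_mul' _ _ ENNReal.ofReal_ne_top
      _ ≤ ENNReal.ofReal (K * α ^ q) * 1 := by gcongr
      _ = ENNReal.ofReal (K * α ^ q) := mul_one _
  calc (∫⁻ x, (‖v x‖₊ : ℝ≥0∞) ^ q) ^ (1/q)
      ≤ (ENNReal.ofReal (K * α ^ q)) ^ (1/q) := by
        exact ENNReal.rpow_le_rpow key (by positivity)
    _ = ENNReal.ofReal ((K * α ^ q) ^ (1/q)) := by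
        rw [← ENNReal.ofReal_rpow_of_nonneg (by positivity) (by positivity)]
    _ = ENNReal.ofReal (K ^ (1/q) * α) := by
        congr 1
        rw [Real.mul_rpow hKpos.le (by positivity), ← Real.rpow_mul hα.le]
        rw [mul_one_div, div_self hq0.ne', Real.rpow_one]

lemma expL2Norm_nonneg {N : ℕ} (v : EuclideanSpace ℝ (Fin N) → ℝ) : 0 ≤ expL2Norm v :=
  Real.sInf_nonneg (fun _ h => h.1.le)

lemma embed_inf {N : ℕ} {q : ℝ} (hq : 2 ≤ q) (v : EuclideanSpace ℝ (Fin N) → ℝ)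
    (hne : ∃ α > (0:ℝ), (∫⁻ x, ENNReal.ofReal (Real.exp ((v x) ^ 2 / α ^ 2) - 1)) ≤ 1) :
    eLpNorm v (ENNReal.ofReal q) volume ≤
      ENNReal.ofReal ((Nat.factorial (Nat.ceil (q/2)) : ℝ) ^ (1/q) * expL2Norm v) := by
  set c : ℝ := (Nat.factorial (Nat.ceil (q/2)) : ℝ) ^ (1/q) with hc
  have hcpos : 0 < c := by
    apply Real.rpow_pos_of_pos
    exact_mod_cast Nat.factorial_pos _
  set S := {α : ℝ | 0 < α ∧
    (∫⁻ x, ENNReal.ofReal (Real.exp ((v x) ^ 2 / α ^ 2) - 1)) ≤ 1} with hS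
  have hSne : S.Nonempty := by
    obtain ⟨α, hα, h⟩ := hne
    exact ⟨α, hα, h⟩
  have hA : expL2Norm v = sInf S := rfl
  refine ENNReal.le_of_forall_pos_le_add (fun ε hε _ => ?_)
  obtain ⟨α, hαS, hαlt⟩ := Real.lt_sInf_add_pos hSne (ε := (ε : ℝ) / c) (by positivity)
  calc eLpNorm v (ENNReal.ofReal q) volume
      ≤ ENNReal.ofReal (c * α) := embed hq v hαS.1 hαS.2
    _ ≤ ENNReal.ofReal (c * (sInf S + (ε : ℝ) / c)) := by
        apply ENNReal.ofReal_le_ofReal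
        exact mul_le_mul_of_nonneg_left hαlt.le hcpos.le
    _ = ENNReal.ofReal (c * sInf S + (ε : ℝ)) := by
        congr 1; field_simp
    _ ≤ ENNReal.ofReal (c * sInf S) + ENNReal.ofReal (ε : ℝ) :=
        ENNReal.ofReal_add_le
    _ = ENNReal.ofReal (c * expL2Norm v) + ε := by
        rw [hA, ENNReal.ofReal_coe_nnreal]

lemma diff_mem {N : ℕ} (u w : EuclideanSpace ℝ (Fin N) → ℝ)
    (hu : Measurable u) (hw : Measurable w)
    (hu' : ∃ α > (0:ℝ), (∫⁻ x, ENNReal.ofReal (Real.exp ((u x) ^ 2 / α ^ 2) - 1)) ≤ 1)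
    (hw' : ∃ α > (0:ℝ), (∫⁻ x, ENNReal.ofReal (Real.exp ((w x) ^ 2 / α ^ 2) - 1)) ≤ 1) :
    ∃ α > (0:ℝ),
      (∫⁻ x, ENNReal.ofReal (Real.exp (((u x - w x)) ^ 2 / α ^ 2) - 1)) ≤ 1 := by
  obtain ⟨a, ha, hia⟩ := hu'
  obtain ⟨b, hb, hib⟩ := hw'
  set m := max a b with hm
  have hmpos : 0 < m := lt_max_of_lt_left ha
  refine ⟨Real.sqrt 8 * m, by positivity, ?_⟩
  have hα2 : (Real.sqrt 8 * m) ^ 2 = 8 * m ^ 2 := by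
    rw [mul_pow, Real.sq_sqrt (by norm_num)]
  have hpt : ∀ x, ENNReal.ofReal (Real.exp ((u x - w x) ^ 2 / (Real.sqrt 8 * m) ^ 2) - 1) ≤
      ENNReal.ofReal (2⁻¹ * (Real.exp ((u x) ^ 2 / a ^ 2) - 1)) +
      ENNReal.ofReal (2⁻¹ * (Real.exp ((w x) ^ 2 / b ^ 2) - 1)) := by
    intro x
    have h1 : Real.exp ((u x - w x) ^ 2 / (Real.sqrt 8 * m) ^ 2) ≤
        2⁻¹ * Real.exp ((u x) ^ 2 / a ^ 2) + 2⁻¹ * Real.exp ((w x) ^ 2 / b ^ 2) := by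
      have hd : (u x - w x) ^ 2 / (Real.sqrt 8 * m) ^ 2 ≤
          (u x) ^ 2 / (4 * m ^ 2) + (w x) ^ 2 / (4 * m ^ 2) := by
        rw [hα2, ← add_div, div_le_div_iff₀ (by positivity) (by positivity)]
        nlinarith [sq_nonneg (u x + w x), sq_nonneg (u x - w x)]
      have hexp : Real.exp ((u x - w x) ^ 2 / (Real.sqrt 8 * m) ^ 2) ≤
          Real.exp ((u x) ^ 2 / (4 * m ^ 2) + (w x) ^ 2 / (4 * m ^ 2)) := Real.exp_le_exp.mpr hd
      set X := Real.exp ((u x) ^ 2 / (4 * m ^ 2)) with hX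
      set Y := Real.exp ((w x) ^ 2 / (4 * m ^ 2)) with hY
      have hXY : Real.exp ((u x) ^ 2 / (4 * m ^ 2) + (w x) ^ 2 / (4 * m ^ 2)) = X * Y :=
        Real.exp_add _ _
      have hX2 : X * X = Real.exp ((u x) ^ 2 / (2 * m ^ 2)) := by
        rw [hX, ← Real.exp_add]; congr 1; ring
      have hY2 : Y * Y = Real.exp ((w x) ^ 2 / (2 * m ^ 2)) := by
        rw [hY, ← Real.exp_add]; congr 1; ring
      have hAM : X * Y ≤ 2⁻¹ * (X * X) + 2⁻¹ * (Y * Y) := by nlinarith [sq_nonneg (X - Y)]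
      have hua : Real.exp ((u x) ^ 2 / (2 * m ^ 2)) ≤ Real.exp ((u x) ^ 2 / a ^ 2) := by
        apply Real.exp_le_exp.mpr
        apply div_le_div_of_nonneg_left (sq_nonneg _) (by positivity)
        nlinarith [le_max_left a b, ha, hmpos]
      have hwb : Real.exp ((w x) ^ 2 / (2 * m ^ 2)) ≤ Real.exp ((w x) ^ 2 / b ^ 2) := by
        apply Real.exp_le_exp.mpr
        apply div_le_div_of_nonneg_left (sq_nonneg _) (by positivity)
        nlinarith [le_max_right a b, hb, hmpos]
      rw [hXY] at hexp
      rw [hX2] at hAM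
      rw [hY2] at hAM
      linarith
    calc ENNReal.ofReal (Real.exp ((u x - w x) ^ 2 / (Real.sqrt 8 * m) ^ 2) - 1)
        ≤ ENNReal.ofReal (2⁻¹ * (Real.exp ((u x) ^ 2 / a ^ 2) - 1) +
            2⁻¹ * (Real.exp ((w x) ^ 2 / b ^ 2) - 1)) := by
          apply ENNReal.ofReal_le_ofReal; linarith
      _ ≤ _ := ENNReal.ofReal_add_le
  have hm1 : Measurable fun x => ENNReal.ofReal (2⁻¹ * (Real.exp ((u x) ^ 2 / a ^ 2) - 1)) := by
    fun_prop
  have hm2 : Measurable fun x => ENNReal.ofReal (2⁻¹ * (Real.exp ((w x) ^ 2 / b ^ 2) - 1)) := by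
    fun_prop
  have half1 : (∫⁻ x, ENNReal.ofReal (2⁻¹ * (Real.exp ((u x) ^ 2 / a ^ 2) - 1))) ≤
      ENNReal.ofReal 2⁻¹ := by
    calc (∫⁻ x, ENNReal.ofReal (2⁻¹ * (Real.exp ((u x) ^ 2 / a ^ 2) - 1)))
        = ∫⁻ x, ENNReal.ofReal 2⁻¹ * ENNReal.ofReal (Real.exp ((u x) ^ 2 / a ^ 2) - 1) := by
          congr 1; funext x; rw [← ENNReal.ofReal_mul (by norm_num)]
      _ = ENNReal.ofReal 2⁻¹ * ∫⁻ x, ENNReal.ofReal (Real.exp ((u x) ^ 2 / a ^ 2) - 1) :=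
          lintegral_const_mul' _ _ ENNReal.ofReal_ne_top
      _ ≤ ENNReal.ofReal 2⁻¹ * 1 := by gcongr
      _ = ENNReal.ofReal 2⁻¹ := mul_one _
  have half2 : (∫⁻ x, ENNReal.ofReal (2⁻¹ * (Real.exp ((w x) ^ 2 / b ^ 2) - 1))) ≤
      ENNReal.ofReal 2⁻¹ := by
    calc (∫⁻ x, ENNReal.ofReal (2⁻¹ * (Real.exp ((w x) ^ 2 / b ^ 2) - 1)))
        = ∫⁻ x, ENNReal.ofReal 2⁻¹ * ENNReal.ofReal (Real.exp ((w x) ^ 2 / b ^ 2) - 1) := by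
          congr 1; funext x; rw [← ENNReal.ofReal_mul (by norm_num)]
      _ = ENNReal.ofReal 2⁻¹ * ∫⁻ x, ENNReal.ofReal (Real.exp ((w x) ^ 2 / b ^ 2) - 1) :=
          lintegral_const_mul' _ _ ENNReal.ofReal_ne_top
      _ ≤ ENNReal.ofReal 2⁻¹ * 1 := by gcongr
      _ = ENNReal.ofReal 2⁻¹ := mul_one _
  calc (∫⁻ x, ENNReal.ofReal (Real.exp ((u x - w x) ^ 2 / (Real.sqrt 8 * m) ^ 2) - 1))
      ≤ ∫⁻ x, (ENNReal.ofReal (2⁻¹ * (Real.exp ((u x) ^ 2 / a ^ 2) - 1)) +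
          ENNReal.ofReal (2⁻¹ * (Real.exp ((w x) ^ 2 / b ^ 2) - 1))) := lintegral_mono hpt
    _ = (∫⁻ x, ENNReal.ofReal (2⁻¹ * (Real.exp ((u x) ^ 2 / a ^ 2) - 1))) +
        (∫⁻ x, ENNReal.ofReal (2⁻¹ * (Real.exp ((w x) ^ 2 / b ^ 2) - 1))) :=
        lintegral_add_left hm1 _
    _ ≤ ENNReal.ofReal 2⁻¹ + ENNReal.ofReal 2⁻¹ := add_le_add half1 half2
    _ ≤ 1 := by
        rw [← ENNReal.ofReal_add (by norm_num) (by norm_num)]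
        norm_num

lemma cont_of_growth {C lam : ℝ} (hC : 0 < C) (hlam : 0 < lam) {f : ℝ → ℝ}
    (hf : ∀ u v : ℝ, |f u - f v| ≤
      C * |u - v| * (Real.exp (lam * u ^ 2) + Real.exp (lam * v ^ 2))) :
    Continuous f := by
  rw [Metric.continuous_iff]
  intro a ε hε
  set E : ℝ := Real.exp (lam * (|a| + 1) ^ 2) with hE
  have hEpos : 0 < E := Real.exp_pos _
  set L : ℝ := 2 * C * E with hL
  have hLpos : 0 < L := by positivity
  refine ⟨min 1 (ε / L / 2), by positivity, fun u hu => ?_⟩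
  rw [Real.dist_eq] at hu ⊢
  have hu1 : |u - a| < 1 := lt_of_lt_of_le hu (min_le_left _ _)
  have hu2 : |u - a| < ε / L / 2 := lt_of_lt_of_le hu (min_le_right _ _)
  have hub : |u| ≤ |a| + 1 := by
    have := abs_sub_abs_le_abs_sub u a
    linarith
  have h1 : Real.exp (lam * u ^ 2) ≤ E := by
    apply Real.exp_le_exp.mpr
    apply mul_le_mul_of_nonneg_left _ hlam.le
    calc u ^ 2 = |u| ^ 2 := (sq_abs u).symm
      _ ≤ (|a| + 1) ^ 2 := by nlinarith [abs_nonneg u, abs_nonneg a]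
  have h2 : Real.exp (lam * a ^ 2) ≤ E := by
    apply Real.exp_le_exp.mpr
    apply mul_le_mul_of_nonneg_left _ hlam.le
    calc a ^ 2 = |a| ^ 2 := (sq_abs a).symm
      _ ≤ (|a| + 1) ^ 2 := by nlinarith [abs_nonneg a]
  calc |f u - f a| ≤ C * |u - a| * (Real.exp (lam * u ^ 2) + Real.exp (lam * a ^ 2)) := hf u a
    _ ≤ |u - a| * L := by
        rw [hL]
        have habs : 0 ≤ |u - a| := abs_nonneg _
        nlinarith [mul_nonneg (mul_nonneg hC.le habs) (sub_nonneg.mpr h1), mul_nonneg (mul_nonneg hC.le habs) (sub_nonneg.mpr h2)]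
    _ < (ε / L / 2) * L := mul_lt_mul_of_pos_right hu2 hLpos
    _ = ε / 2 := by field_simp
    _ < ε := by linarith

/-- Lipschitz-type estimate for nonlinearities of exponential growth:
    ‖f(u)−f(w)‖_{L^p} ≤ C'‖u−w‖_{exp L²}(1 + ‖e^{λu²}−1‖_{L^{2p}} + ‖e^{λw²}−1‖_{L^{2p}}). -/
theorem nonlinearity_Lp_estimate {N : ℕ} (C lam p : ℝ) (hC : 0 < C) (hlam : 0 < lam)
    (hp : 2 ≤ p) (f : ℝ → ℝ) (hf0 : f 0 = 0)
    (hf : ∀ u v : ℝ, |f u - f v| ≤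
      C * |u - v| * (Real.exp (lam * u ^ 2) + Real.exp (lam * v ^ 2))) :
    ∃ C' > (0 : ℝ), ∀ u w : EuclideanSpace ℝ (Fin N) → ℝ,
      Measurable u → Measurable w →
      (∃ α > (0 : ℝ), (∫⁻ x, ENNReal.ofReal (Real.exp ((u x) ^ 2 / α ^ 2) - 1)) ≤ 1) →
      (∃ α > (0 : ℝ), (∫⁻ x, ENNReal.ofReal (Real.exp ((w x) ^ 2 / α ^ 2) - 1)) ≤ 1) →
      eLpNorm (fun x => f (u x) - f (w x)) (ENNReal.ofReal p) volume ≤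
        ENNReal.ofReal (C' * expL2Norm (fun x => u x - w x)) *
          (1 + eLpNorm (fun x => Real.exp (lam * (u x) ^ 2) - 1) (ENNReal.ofReal (2 * p)) volume
             + eLpNorm (fun x => Real.exp (lam * (w x) ^ 2) - 1) (ENNReal.ofReal (2 * p)) volume)
    := by
  have hp0 : 0 < p := by linarith
  set cp : ℝ := (Nat.factorial (Nat.ceil (p / 2)) : ℝ) ^ (1 / p) with hcp
  set c2p : ℝ := (Nat.factorial (Nat.ceil ((2 * p) / 2)) : ℝ) ^ (1 / (2 * p)) with hc2p
  have hcp_pos : 0 < cp := Real.rpow_pos_of_pos (by exact_mod_cast Nat.factorial_pos _) _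
  have hc2p_pos : 0 < c2p := Real.rpow_pos_of_pos (by exact_mod_cast Nat.factorial_pos _) _
  refine ⟨max (2 * C * cp) (C * c2p), lt_of_lt_of_le (by positivity) (le_max_left _ _), ?_⟩
  set C' : ℝ := max (2 * C * cp) (C * c2p) with hC'def
  intro u w hu hw hmu hmw
  have hfc : Continuous f := cont_of_growth hC hlam hf
  set v : EuclideanSpace ℝ (Fin N) → ℝ := fun x => u x - w x with hvdef
  have hv : Measurable v := hu.sub hw
  set A : ℝ := expL2Norm v with hA
  have hA0 : 0 ≤ A := expL2Norm_nonneg v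
  have hvmem := diff_mem u w hu hw hmu hmw
  have hvP : eLpNorm v (ENNReal.ofReal p) volume ≤ ENNReal.ofReal (cp * A) :=
    embed_inf hp v hvmem
  have hvP2 : eLpNorm v (ENNReal.ofReal (2 * p)) volume ≤ ENNReal.ofReal (c2p * A) :=
    embed_inf (by linarith) v hvmem
  set g1 : EuclideanSpace ℝ (Fin N) → ℝ := fun x => Real.exp (lam * (u x) ^ 2) - 1 with hg1def
  set g2 : EuclideanSpace ℝ (Fin N) → ℝ := fun x => Real.exp (lam * (w x) ^ 2) - 1 with hg2def
  have hg1m : Measurable g1 := by fun_prop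
  have hg2m : Measurable g2 := by fun_prop
  have hg1nn : ∀ x, 0 ≤ g1 x := fun x => by
    simp only [hg1def, sub_nonneg, Real.one_le_exp_iff]
    positivity
  have hg2nn : ∀ x, 0 ≤ g2 x := fun x => by
    simp only [hg2def, sub_nonneg, Real.one_le_exp_iff]
    positivity
  set F1 : EuclideanSpace ℝ (Fin N) → ℝ := fun x => 2 * C * |v x| with hF1def
  set F2 : EuclideanSpace ℝ (Fin N) → ℝ := fun x => (C * |v x|) * g1 x with hF2def
  set F3 : EuclideanSpace ℝ (Fin N) → ℝ := fun x => (C * |v x|) * g2 x with hF3def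
  have hF1m : AEStronglyMeasurable F1 volume := (hv.abs.const_mul (2 * C)).aestronglyMeasurable
  have hF2m : AEStronglyMeasurable F2 volume :=
    ((hv.abs.const_mul C).mul hg1m).aestronglyMeasurable
  have hF3m : AEStronglyMeasurable F3 volume :=
    ((hv.abs.const_mul C).mul hg2m).aestronglyMeasurable
  have hCvm : AEStronglyMeasurable (fun x => C * |v x|) volume :=
    (hv.abs.const_mul C).aestronglyMeasurable
  have hP1 : (1 : ℝ≥0∞) ≤ ENNReal.ofReal p := by
    rw [ENNReal.one_le_ofReal]; linarith
  have hP0 : ENNReal.ofReal p ≠ 0 := by simp [ENNReal.ofReal_eq_zero]; linarith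
  have hPt : ENNReal.ofReal p ≠ ⊤ := ENNReal.ofReal_ne_top
  have hpqr : 1 / ENNReal.ofReal p =
      1 / ENNReal.ofReal (2 * p) + 1 / ENNReal.ofReal (2 * p) := by
    have h2 : ENNReal.ofReal (2 * p) = 2 * ENNReal.ofReal p := by
      rw [ENNReal.ofReal_mul (by norm_num : (0:ℝ) ≤ 2)]
      norm_num
    rw [h2, ENNReal.div_add_div_same, one_add_one_eq_two]
    have h3 := ENNReal.mul_div_mul_left (1:ℝ≥0∞) (ENNReal.ofReal p) two_ne_zero ENNReal.ofNat_ne_top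
    rw [mul_one] at h3
    exact h3.symm
  -- pointwise bound
  have hptw : ∀ x, ‖f (u x) - f (w x)‖ ≤ ‖F1 x + (F2 x + F3 x)‖ := by
    intro x
    have h := hf (u x) (w x)
    have hFnn : 0 ≤ F1 x + (F2 x + F3 x) := by
      have := hg1nn x; have := hg2nn x
      have := abs_nonneg (v x)
      simp only [hF1def, hF2def, hF3def]
      positivity
    rw [Real.norm_eq_abs, Real.norm_eq_abs, abs_of_nonneg hFnn]
    have hexpand : F1 x + (F2 x + F3 x) =
        C * |v x| * (Real.exp (lam * (u x) ^ 2) + Real.exp (lam * (w x) ^ 2)) := by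
      simp only [hF1def, hF2def, hF3def, hg1def, hg2def]
      ring
    rw [hexpand]
    have hvv : v x = u x - w x := rfl
    rw [hvv]
    exact h
  -- terms
  have term1 : eLpNorm F1 (ENNReal.ofReal p) volume ≤ ENNReal.ofReal (C' * A) := by
    have heq : F1 = (2 * C) • (fun x => ‖v x‖) := by
      funext x; simp [hF1def, Real.norm_eq_abs, smul_eq_mul]
    rw [heq, eLpNorm_const_smul, eLpNorm_norm]
    rw [Real.enorm_eq_ofReal_abs, abs_of_nonneg (by positivity : (0:ℝ) ≤ 2 * C)]
    calc ENNReal.ofReal (2 * C) * eLpNorm v (ENNReal.ofReal p) volume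
        ≤ ENNReal.ofReal (2 * C) * ENNReal.ofReal (cp * A) := by gcongr
      _ = ENNReal.ofReal (2 * C * (cp * A)) := by
          rw [← ENNReal.ofReal_mul (by positivity)]
      _ ≤ ENNReal.ofReal (C' * A) := by
          apply ENNReal.ofReal_le_ofReal
          have : 2 * C * cp ≤ C' := le_max_left _ _
          nlinarith
  have hCv : eLpNorm (fun x => C * |v x|) (ENNReal.ofReal (2 * p)) volume ≤
      ENNReal.ofReal (C' * A) := by
    have heq : (fun x => C * |v x|) = C • (fun x => ‖v x‖) := by
      funext x; simp [Real.norm_eq_abs, smul_eq_mul]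
    rw [heq, eLpNorm_const_smul, eLpNorm_norm]
    rw [Real.enorm_eq_ofReal_abs, abs_of_nonneg hC.le]
    calc ENNReal.ofReal C * eLpNorm v (ENNReal.ofReal (2 * p)) volume
        ≤ ENNReal.ofReal C * ENNReal.ofReal (c2p * A) := by gcongr
      _ = ENNReal.ofReal (C * (c2p * A)) := by
          rw [← ENNReal.ofReal_mul (by positivity)]
      _ ≤ ENNReal.ofReal (C' * A) := by
          apply ENNReal.ofReal_le_ofReal
          have : C * c2p ≤ C' := le_max_right _ _
          nlinarith
  have term2 : eLpNorm F2 (ENNReal.ofReal p) volume ≤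
      ENNReal.ofReal (C' * A) * eLpNorm g1 (ENNReal.ofReal (2 * p)) volume := by
    have hH := eLpNorm_le_eLpNorm_mul_eLpNorm'_of_norm (μ := volume)
      hCvm (hg1m.aestronglyMeasurable) (fun a b => a * b) 1
      (Filter.Eventually.of_forall (fun x => by rw [norm_mul, NNReal.coe_one, one_mul]))
      (hpqr := ⟨by simpa only [one_div] using hpqr.symm⟩)
    exact hH.trans (by rw [ENNReal.coe_one, one_mul]; exact mul_le_mul_left hCv _)
  have term3 : eLpNorm F3 (ENNReal.ofReal p) volume ≤
      ENNReal.ofReal (C' * A) * eLpNorm g2 (ENNReal.ofReal (2 * p)) volume := by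
    have hH := eLpNorm_le_eLpNorm_mul_eLpNorm'_of_norm (μ := volume)
      hCvm (hg2m.aestronglyMeasurable) (fun a b => a * b) 1
      (Filter.Eventually.of_forall (fun x => by rw [norm_mul, NNReal.coe_one, one_mul]))
      (hpqr := ⟨by simpa only [one_div] using hpqr.symm⟩)
    exact hH.trans (by rw [ENNReal.coe_one, one_mul]; exact mul_le_mul_left hCv _)
  calc eLpNorm (fun x => f (u x) - f (w x)) (ENNReal.ofReal p) volume
      ≤ eLpNorm (fun x => F1 x + (F2 x + F3 x)) (ENNReal.ofReal p) volume :=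
        eLpNorm_mono hptw
    _ ≤ eLpNorm F1 (ENNReal.ofReal p) volume +
        eLpNorm (fun x => F2 x + F3 x) (ENNReal.ofReal p) volume :=
        eLpNorm_add_le hF1m (hF2m.add hF3m) hP1
    _ ≤ eLpNorm F1 (ENNReal.ofReal p) volume +
        (eLpNorm F2 (ENNReal.ofReal p) volume + eLpNorm F3 (ENNReal.ofReal p) volume) := by
        gcongr
        exact eLpNorm_add_le hF2m hF3m hP1
    _ ≤ ENNReal.ofReal (C' * A) +
        (ENNReal.ofReal (C' * A) * eLpNorm g1 (ENNReal.ofReal (2 * p)) volume +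
         ENNReal.ofReal (C' * A) * eLpNorm g2 (ENNReal.ofReal (2 * p)) volume) := by
        exact add_le_add term1 (add_le_add term2 term3)
    _ = ENNReal.ofReal (C' * A) *
        (1 + eLpNorm g1 (ENNReal.ofReal (2 * p)) volume +
           eLpNorm g2 (ENNReal.ofReal (2 * p)) volume) := by
        rw [mul_add, mul_add, mul_one, add_assoc]
end

section
/- Let λ > 0, m ≥ 2, 1 ≤ r, and let u ∈ exp L²(R^N) with ‖u‖_{exp L²} ≤ M where 2rλM² ≤ 1 and mr ≥ 2. If f satisfies f(0)=0 and |f(u)| ≤ C|u|^m e^{λu²}, then ‖f(u)‖_{L^r} ≤ C' M^m for a constant C' depending only on C, r, m, λ. -/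
open MeasureTheory
open scoped ENNReal

lemma aux1 {a t : ℝ} (ha : 1 ≤ a) (ht : 0 ≤ t) :
    t ^ a ≤ (4 * a) ^ a * (Real.exp t - 1) := by
  have ha0 : 0 < a := lt_of_lt_of_le one_pos ha
  have h4a : (1:ℝ) ≤ 4 * a := by linarith
  rcases le_or_gt t 1 with h1 | h1
  · have hta : t ^ a ≤ t := by
      rcases eq_or_lt_of_le ht with h0 | h0
      · rw [← h0, Real.zero_rpow (ne_of_gt ha0)]
      · calc t ^ a ≤ t ^ (1:ℝ) := Real.rpow_le_rpow_of_exponent_ge h0 h1 ha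
          _ = t := Real.rpow_one t
    have ht' : t ≤ Real.exp t - 1 := by
      have := Real.add_one_le_exp t; linarith
    have hc : (1:ℝ) ≤ (4 * a) ^ a := Real.one_le_rpow h4a ha0.le
    have hnn : 0 ≤ Real.exp t - 1 := by
      have := Real.add_one_le_exp t; linarith [Real.exp_nonneg t]
    calc t ^ a ≤ Real.exp t - 1 := le_trans hta ht'
      _ = 1 * (Real.exp t - 1) := (one_mul _).symm
      _ ≤ (4 * a) ^ a * (Real.exp t - 1) := by
          exact mul_le_mul_of_nonneg_right hc hnn
  · -- t ≥ 1
    have h2a : (0:ℝ) < 2 * a := by linarith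
    have hstep : t ^ a ≤ (2 * a) ^ a * Real.exp (t / 2) := by
      have hx : t / (2 * a) ≤ Real.exp (t / (2 * a)) := (Real.add_one_le_exp _).trans' (by linarith [Real.exp_nonneg (t / (2*a))]) |>.trans (le_refl _)
      have hx' : t / (2 * a) ≤ Real.exp (t / (2 * a)) := by
        have := Real.add_one_le_exp (t / (2 * a)); linarith
      have hpow : (t / (2 * a)) ^ a ≤ Real.exp (t / (2 * a)) ^ a :=
        Real.rpow_le_rpow (by positivity) hx' ha0.le
      have heq : Real.exp (t / (2 * a)) ^ a = Real.exp (t / 2) := by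
        rw [← Real.exp_mul]
        congr 1
        field_simp
      have ht' : t = (2 * a) * (t / (2 * a)) := by field_simp
      calc t ^ a = ((2 * a) * (t / (2 * a))) ^ a := by rw [← ht']
        _ = (2 * a) ^ a * (t / (2 * a)) ^ a := Real.mul_rpow h2a.le (by positivity)
        _ ≤ (2 * a) ^ a * Real.exp (t / 2) := by
            rw [← heq]; exact mul_le_mul_of_nonneg_left hpow (by positivity)
    have hexp : Real.exp (t / 2) ≤ 2 * (Real.exp t - 1) := by
      have h2 : (2:ℝ) ≤ Real.exp t := by
        calc (2:ℝ) ≤ Real.exp 1 := by nlinarith [Real.exp_one_gt_d9]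
          _ ≤ Real.exp t := Real.exp_le_exp.mpr h1.le
      have hsq : Real.exp (t / 2) ^ (2:ℕ) = Real.exp t := by
        rw [← Real.exp_nat_mul]; norm_num; ring_nf
      have h1' : 1 ≤ Real.exp (t / 2) := Real.one_le_exp (by linarith)
      nlinarith [Real.exp_pos (t/2)]
    have hc2 : 2 * (2 * a) ^ a ≤ (4 * a) ^ a := by
      have : (4 * a) ^ a = 2 ^ a * (2 * a) ^ a := by
        rw [← Real.mul_rpow (by norm_num) h2a.le]; ring_nf
      rw [this]
      have h2a' : (2:ℝ) ≤ 2 ^ a := by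
        calc (2:ℝ) = 2 ^ (1:ℝ) := (Real.rpow_one 2).symm
          _ ≤ 2 ^ a := Real.rpow_le_rpow_of_exponent_le (by norm_num) ha
      exact mul_le_mul_of_nonneg_right h2a' (by positivity)
    have hnn : 0 ≤ Real.exp t - 1 := by
      have := Real.add_one_le_exp t; linarith [Real.exp_nonneg t]
    calc t ^ a ≤ (2 * a) ^ a * Real.exp (t / 2) := hstep
      _ ≤ (2 * a) ^ a * (2 * (Real.exp t - 1)) :=
          mul_le_mul_of_nonneg_left hexp (by positivity)
      _ = 2 * (2 * a) ^ a * (Real.exp t - 1) := by ring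
      _ ≤ (4 * a) ^ a * (Real.exp t - 1) := mul_le_mul_of_nonneg_right hc2 hnn

lemma aux2 {a t : ℝ} (ha : 1 ≤ a) (ht : 0 ≤ t) :
    t ^ a * Real.exp (t / 2) ≤ (16 * a) ^ a * (Real.exp t - 1) := by
  have ha0 : 0 < a := lt_of_lt_of_le one_pos ha
  have h1 : t ^ a ≤ (16 * a) ^ a * (Real.exp (t / 4) - 1) := by
    have h := aux1 ha (t := t / 4) (by linarith)
    have ht4 : t = 4 * (t / 4) := by ring
    calc t ^ a = (4 * (t / 4)) ^ a := by rw [← ht4]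
      _ = 4 ^ a * (t / 4) ^ a := Real.mul_rpow (by norm_num) (by linarith)
      _ ≤ 4 ^ a * ((4 * a) ^ a * (Real.exp (t / 4) - 1)) :=
          mul_le_mul_of_nonneg_left h (by positivity)
      _ = (16 * a) ^ a * (Real.exp (t / 4) - 1) := by
          rw [← mul_assoc, ← Real.mul_rpow (by norm_num) (by positivity)]; ring_nf
  have h2 : (Real.exp (t / 4) - 1) * Real.exp (t / 2) ≤ Real.exp t - 1 := by
    set x := Real.exp (t / 4) with hx
    have hx1 : 1 ≤ x := Real.one_le_exp (by linarith)
    have h2' : Real.exp (t / 2) = x ^ (2:ℕ) := by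
      rw [hx, ← Real.exp_nat_mul]; norm_num; ring_nf
    have h4' : Real.exp t = x ^ (4:ℕ) := by
      rw [hx, ← Real.exp_nat_mul]; norm_num; ring_nf
    rw [h2', h4']
    nlinarith [sq_nonneg x, sq_nonneg (x - 1)]
  calc t ^ a * Real.exp (t / 2)
      ≤ (16 * a) ^ a * (Real.exp (t / 4) - 1) * Real.exp (t / 2) := by
        exact mul_le_mul_of_nonneg_right h1 (Real.exp_nonneg _)
    _ = (16 * a) ^ a * ((Real.exp (t / 4) - 1) * Real.exp (t / 2)) := by ring
    _ ≤ (16 * a) ^ a * (Real.exp t - 1) :=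
        mul_le_mul_of_nonneg_left h2 (by positivity)

lemma aux3 (lam m r C : ℝ) (hlam : 0 < lam) (hm : 2 ≤ m)
    (hr : 1 ≤ r) (hmr : 2 ≤ m * r) (hC : 0 < C)
    (f : ℝ → ℝ)
    (hf : ∀ s : ℝ, |f s| ≤ C * |s| ^ m * Real.exp (lam * s ^ 2))
    (M : ℝ) (hM : 0 < M) (hsmall : 2 * r * lam * M ^ 2 ≤ 1) (s : ℝ) :
    |f s| ^ r ≤ C ^ r * (8 * m * r) ^ (m * r / 2) * M ^ (m * r) *
      (Real.exp (s ^ 2 / M ^ 2) - 1) := by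
  have hr0 : 0 < r := lt_of_lt_of_le one_pos hr
  set a : ℝ := m * r / 2 with ha_def
  have ha : 1 ≤ a := by rw [ha_def]; linarith
  have ha0 : 0 < a := lt_of_lt_of_le one_pos ha
  set t : ℝ := s ^ 2 / M ^ 2 with ht_def
  have ht : 0 ≤ t := by positivity
  have h1 : |f s| ^ r ≤ C ^ r * |s| ^ (m * r) * Real.exp (r * lam * s ^ 2) := by
    have := Real.rpow_le_rpow (abs_nonneg (f s)) (hf s) hr0.le
    calc |f s| ^ r ≤ (C * |s| ^ m * Real.exp (lam * s ^ 2)) ^ r := this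
      _ = C ^ r * (|s| ^ m) ^ r * (Real.exp (lam * s ^ 2)) ^ r := by
          rw [Real.mul_rpow (by positivity) (Real.exp_nonneg _),
            Real.mul_rpow hC.le (by positivity)]
      _ = C ^ r * |s| ^ (m * r) * Real.exp (r * lam * s ^ 2) := by
          rw [← Real.rpow_mul (abs_nonneg s), ← Real.exp_mul]
          ring_nf
  have hkey : r * lam * s ^ 2 ≤ t / 2 := by
    have h := mul_le_mul_of_nonneg_right hsmall
      (by positivity : (0:ℝ) ≤ s ^ 2 / (2 * M ^ 2))
    calc r * lam * s ^ 2 = 2 * r * lam * M ^ 2 * (s ^ 2 / (2 * M ^ 2)) := by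
          field_simp
      _ ≤ 1 * (s ^ 2 / (2 * M ^ 2)) := h
      _ = t / 2 := by rw [ht_def]; ring
  have habs : |s| ^ (m * r) = M ^ (m * r) * t ^ a := by
    have h2a : m * r = 2 * a := by rw [ha_def]; ring
    have hs2 : |s| ^ (2:ℝ) = M ^ 2 * t := by
      rw [show (2:ℝ) = ((2:ℕ):ℝ) by norm_num, Real.rpow_natCast, sq_abs, ht_def]
      field_simp
    have hM2 : M ^ (2:ℝ) = M ^ 2 := by
      rw [show (2:ℝ) = ((2:ℕ):ℝ) by norm_num, Real.rpow_natCast]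
    calc |s| ^ (m * r) = (|s| ^ (2:ℝ)) ^ a := by
          rw [← Real.rpow_mul (abs_nonneg s), ← h2a]
      _ = (M ^ 2 * t) ^ a := by rw [hs2]
      _ = (M ^ 2) ^ a * t ^ a := Real.mul_rpow (by positivity) ht
      _ = M ^ (m * r) * t ^ a := by
          rw [← hM2, ← Real.rpow_mul hM.le, ← h2a]
  have h2 : |f s| ^ r ≤ C ^ r * M ^ (m * r) * (t ^ a * Real.exp (t / 2)) := by
    calc |f s| ^ r ≤ C ^ r * |s| ^ (m * r) * Real.exp (r * lam * s ^ 2) := h1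
      _ ≤ C ^ r * |s| ^ (m * r) * Real.exp (t / 2) := by
          apply mul_le_mul_of_nonneg_left (Real.exp_le_exp.mpr hkey) (by positivity)
      _ = C ^ r * M ^ (m * r) * (t ^ a * Real.exp (t / 2)) := by rw [habs]; ring
  have h3 := aux2 ha ht
  have h4 : (16 * a) ^ a = (8 * m * r) ^ a := by
    have : 16 * a = 8 * m * r := by rw [ha_def]; ring
    rw [this]
  calc |f s| ^ r ≤ C ^ r * M ^ (m * r) * (t ^ a * Real.exp (t / 2)) := h2
    _ ≤ C ^ r * M ^ (m * r) * ((16 * a) ^ a * (Real.exp t - 1)) := by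
        apply mul_le_mul_of_nonneg_left h3 (by positivity)
    _ = C ^ r * (8 * m * r) ^ (m * r / 2) * M ^ (m * r) * (Real.exp t - 1) := by
        rw [h4, ← ha_def]; ring

/-- If ‖u‖_{exp L²} ≤ M (expressed via the Luxembourg integral condition),
    2rλM² ≤ 1 and |f(s)| ≤ C|s|^m e^{λs²} with f(0)=0, then ‖f(u)‖_{L^r} ≤ C' M^m
    with C' depending only on C, r, m, λ. -/
theorem nonlinearity_Lr_bound {N : ℕ} (lam m r C : ℝ) (hlam : 0 < lam) (hm : 2 ≤ m)
    (hr : 1 ≤ r) (hmr : 2 ≤ m * r) (hC : 0 < C)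
    (f : ℝ → ℝ) (hf0 : f 0 = 0)
    (hf : ∀ s : ℝ, |f s| ≤ C * |s| ^ m * Real.exp (lam * s ^ 2)) :
    ∃ C' > (0 : ℝ), ∀ (u : EuclideanSpace ℝ (Fin N) → ℝ) (M : ℝ),
      Measurable u → 0 < M → 2 * r * lam * M ^ 2 ≤ 1 →
      (∫⁻ x, ENNReal.ofReal (Real.exp ((u x) ^ 2 / M ^ 2) - 1)) ≤ 1 →
      eLpNorm (fun x => f (u x)) (ENNReal.ofReal r) volume ≤
        ENNReal.ofReal (C' * M ^ m) := by
  have hr0 : 0 < r := lt_of_lt_of_le one_pos hr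
  have hm0 : (0:ℝ) < m := by linarith
  have h8mr : (0:ℝ) < 8 * m * r := by positivity
  refine ⟨C * (8 * m * r) ^ (m / 2),
    mul_pos hC (Real.rpow_pos_of_pos h8mr _), ?_⟩
  intro u M hu hM hsmall hint
  have hp0 : ENNReal.ofReal r ≠ 0 := by
    simp only [ne_eq, ENNReal.ofReal_eq_zero, not_le]; linarith
  have hptop : ENNReal.ofReal r ≠ ⊤ := ENNReal.ofReal_ne_top
  rw [eLpNorm_eq_lintegral_rpow_enorm_toReal hp0 hptop, ENNReal.toReal_ofReal hr0.le]
  set K : ℝ := C ^ r * (8 * m * r) ^ (m * r / 2) * M ^ (m * r) with hK_def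
  have hK0 : 0 ≤ K := by
    rw [hK_def]; positivity
  have hpt : ∀ x, (‖f (u x)‖₊ : ℝ≥0∞) ^ r ≤
      ENNReal.ofReal K * ENNReal.ofReal (Real.exp ((u x) ^ 2 / M ^ 2) - 1) := by
    intro x
    have h := aux3 lam m r C hlam hm hr hmr hC f hf M hM hsmall (u x)
    have hn : (‖f (u x)‖₊ : ℝ≥0∞) ^ r = ENNReal.ofReal (|f (u x)| ^ r) := by
      rw [← enorm_eq_nnnorm, Real.enorm_eq_ofReal_abs,
        ENNReal.ofReal_rpow_of_nonneg (abs_nonneg _) hr0.le]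
    rw [hn, ← ENNReal.ofReal_mul hK0]
    exact ENNReal.ofReal_le_ofReal h
  have hI : (∫⁻ x, (‖f (u x)‖₊ : ℝ≥0∞) ^ r) ≤ ENNReal.ofReal K := by
    calc (∫⁻ x, (‖f (u x)‖₊ : ℝ≥0∞) ^ r)
        ≤ ∫⁻ x, ENNReal.ofReal K *
            ENNReal.ofReal (Real.exp ((u x) ^ 2 / M ^ 2) - 1) := lintegral_mono hpt
      _ = ENNReal.ofReal K *
            ∫⁻ x, ENNReal.ofReal (Real.exp ((u x) ^ 2 / M ^ 2) - 1) :=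
          lintegral_const_mul' _ _ ENNReal.ofReal_ne_top
      _ ≤ ENNReal.ofReal K * 1 := mul_le_mul_right hint _
      _ = ENNReal.ofReal K := mul_one _
  have hKr : K ^ (1 / r) = C * (8 * m * r) ^ (m / 2) * M ^ m := by
    have e1 : (C ^ r) ^ (1 / r) = C := by
      rw [← Real.rpow_mul hC.le, mul_one_div, div_self (ne_of_gt hr0), Real.rpow_one]
    have e2 : ((8 * m * r) ^ (m * r / 2)) ^ (1 / r) = (8 * m * r) ^ (m / 2) := by
      rw [← Real.rpow_mul h8mr.le]
      congr 1
      field_simp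
    have e3 : (M ^ (m * r)) ^ (1 / r) = M ^ m := by
      rw [← Real.rpow_mul hM.le]
      congr 1
      field_simp
    rw [hK_def, Real.mul_rpow (by positivity) (by positivity),
      Real.mul_rpow (by positivity) (by positivity), e1, e2, e3]
  calc (∫⁻ x, (‖f (u x)‖₊ : ℝ≥0∞) ^ r) ^ (1 / r)
      ≤ (ENNReal.ofReal K) ^ (1 / r) := ENNReal.rpow_le_rpow hI (by positivity)
    _ = ENNReal.ofReal (K ^ (1 / r)) :=
        ENNReal.ofReal_rpow_of_nonneg hK0 (by positivity)
    _ = ENNReal.ofReal (C * (8 * m * r) ^ (m / 2) * M ^ m) := by rw [hKr]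
end
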